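/- (Theorem 1 of the paper: correctness of Dijkstra's algorithm under a δ-partial-ordering.) Let all edge weights satisfy w u v ≥ δ for a fixed real δ > 0, assume every vertex is reachable from the source s (d(v) < ∞ for all v), and let v_1, …, v_n be a bijective enumeration of V with v_1 = s that is a δ-partial-ordering (i < j implies d(v_i) < d(v_j) + δ). Then Dijkstra's label recursion processed in this order is correct: D_j(v_j) = d(v_j) for every j with 1 ≤ j ≤ n, and consequently the final labels satisfy D_{n+1}(v) = d(v) for every v ∈ V. -/

import Mathlib

open scoped ENNReal

/-- The length of the path `p 0, p 1, …, p k` in a graph on `Fin n` with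
edge-weight function `w` (where `w u v = ∞` encodes the absence of an edge). -/
noncomputable def pathCost {n : ℕ} (w : Fin n → Fin n → ℝ≥0∞) (p : ℕ → Fin n) (k : ℕ) : ℝ≥0∞ :=
  ∑ i ∈ Finset.range k, w (p i) (p (i + 1))

/-- The shortest-path distance from `s` to `v`: the infimum over all finite paths
from `s` to `v` of their lengths. -/
noncomputable def spDist {n : ℕ} (w : Fin n → Fin n → ℝ≥0∞) (s v : Fin n) : ℝ≥0∞ :=
  ⨅ (k : ℕ) (p : ℕ → Fin n) (_ : p 0 = s) (_ : p k = v), pathCost w p k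

/-- Dijkstra's label recursion, processed according to the enumeration `e` (0-indexed):
`dijkstraD w s e 0` is the initial labelling (`0` at `s`, `∞` elsewhere), and step `j`
relaxes all edges out of the extracted vertex `e j`.  The paper's `D_j` is
`dijkstraD w s e (j-1)`; the extraction value of `v_j` is `dijkstraD w s e (j-1) (e (j-1))`. -/
noncomputable def dijkstraD {n : ℕ} (w : Fin n → Fin n → ℝ≥0∞) (s : Fin n) (e : Fin n → Fin n) :
    ℕ → Fin n → ℝ≥0∞
  | 0 => fun u => if u = s then 0 else ⊤
  | j + 1 => fun u =>
      if h : j < n then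
        min (dijkstraD w s e j u) (dijkstraD w s e j (e ⟨j, h⟩) + w (e ⟨j, h⟩) u)
      else dijkstraD w s e j u

section Aux
variable {n : ℕ} (w : Fin n → Fin n → ℝ≥0∞) (s : Fin n) (e : Fin n → Fin n)

lemma spDist_le {v : Fin n} (k : ℕ) (p : ℕ → Fin n) (h1 : p 0 = s) (h2 : p k = v) :
    spDist w s v ≤ pathCost w p k :=
  iInf_le_of_le k (iInf_le_of_le p (iInf_le_of_le h1 (iInf_le _ h2)))

lemma spDist_self : spDist w s s = 0 :=
  le_antisymm (by simpa [pathCost] using spDist_le w s 0 (fun _ => s) rfl rfl) (zero_le)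

lemma spDist_triangle (u v : Fin n) : spDist w s v ≤ spDist w s u + w u v := by
  have heq : spDist w s u + w u v =
      ⨅ (k : ℕ) (p : ℕ → Fin n) (_ : p 0 = s) (_ : p k = u), (pathCost w p k + w u v) := by
    simp only [spDist, ENNReal.iInf_add]
  rw [heq]
  refine le_iInf fun k => le_iInf fun p => le_iInf fun h1 => le_iInf fun h2 => ?_
  refine le_trans (spDist_le w s (k + 1) (fun i => if i ≤ k then p i else v)
    (by simp [h1]) (by simp)) ?_
  have : pathCost w (fun i => if i ≤ k then p i else v) (k + 1) = pathCost w p k + w u v := by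
    rw [pathCost, Finset.sum_range_succ]
    congr 1
    · refine Finset.sum_congr rfl fun i hi => ?_
      rw [Finset.mem_range] at hi
      simp [hi.le, Nat.succ_le_of_lt hi]
    · simp [h2]
  rw [this]

lemma dijkstraD_succ_le (j : ℕ) (u : Fin n) :
    dijkstraD w s e (j + 1) u ≤ dijkstraD w s e j u := by
  rw [dijkstraD]
  split
  · exact min_le_left _ _
  · exact le_rfl

lemma dijkstraD_anti {a b : ℕ} (h : a ≤ b) (u : Fin n) :
    dijkstraD w s e b u ≤ dijkstraD w s e a u := by
  induction b with
  | zero => simp_all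
  | succ b ih =>
    rcases Nat.lt_or_ge a (b + 1) with h' | h'
    · exact le_trans (dijkstraD_succ_le w s e b u) (ih (Nat.lt_succ_iff.mp h'))
    · have : a = b + 1 := le_antisymm h h'
      subst this; exact le_rfl

lemma spDist_le_dijkstraD (j : ℕ) (u : Fin n) :
    spDist w s u ≤ dijkstraD w s e j u := by
  induction j generalizing u with
  | zero =>
    rcases eq_or_ne u s with h | h
    · subst h; simp [dijkstraD, spDist_self]
    · simp [dijkstraD, h]
  | succ j ih =>
    rw [dijkstraD]
    split
    · exact le_min (ih u) (le_trans (spDist_triangle w s _ u) (add_le_add_left (ih _) _))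
    · exact ih u

lemma pathCost_mono (p : ℕ → Fin n) {a b : ℕ} (h : a ≤ b) :
    pathCost w p a ≤ pathCost w p b :=
  Finset.sum_le_sum_of_subset (Finset.range_subset_range.mpr h)

end Aux

/-- Theorem 1: correctness of Dijkstra's algorithm under a δ-partial-ordering.
If all edge weights are at least `δ > 0`, every vertex is reachable from `s`, and
`e` is a bijective enumeration of the vertices starting at `s` that is a
δ-partial-ordering, then every extraction value is correct (`D_j (v_j) = d (v_j)`)
and the final labels equal the shortest-path distances. -/
theorem dijkstra_correct_of_deltaPO {n : ℕ} (hn : 0 < n) (w : Fin n → Fin n → ℝ≥0∞) (s : Fin n)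
    (δ : ℝ) (hδ : 0 < δ) (hw : ∀ u v : Fin n, ENNReal.ofReal δ ≤ w u v)
    (hreach : ∀ v : Fin n, spDist w s v < ⊤)
    (e : Fin n → Fin n) (he : Function.Bijective e) (hes : e ⟨0, hn⟩ = s)
    (hPO : ∀ i j : Fin n, i < j → spDist w s (e i) < spDist w s (e j) + ENNReal.ofReal δ) :
    (∀ j : Fin n, dijkstraD w s e j.val (e j) = spDist w s (e j)) ∧
      (∀ v : Fin n, dijkstraD w s e n v = spDist w s v) := by
  set E := Equiv.ofBijective e he with hE
  have hEe : ∀ x, e (E.symm x) = x := fun x => Equiv.ofBijective_apply_symm_apply e he x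
  have hsymm : ∀ j : Fin n, E.symm (e j) = j := fun j => E.symm_apply_apply j
  have main : ∀ t : ℕ, ∀ j : Fin n, j.val = t →
      dijkstraD w s e j.val (e j) = spDist w s (e j) := by
    intro t
    induction t using Nat.strong_induction_on with
    | _ t IH =>
      intro j hj
      refine le_antisymm ?_ (spDist_le_dijkstraD w s e _ _)
      rcases Nat.eq_zero_or_pos t with ht | ht
      · have hj0 : j = ⟨0, hn⟩ := Fin.ext (show j.val = 0 by omega)
        subst hj0
        rw [hes, spDist_self]
        show dijkstraD w s e 0 s ≤ 0
        simp [dijkstraD]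
      -- t ≥ 1
      apply ENNReal.le_of_forall_pos_le_add
      intro ε' hε' _
      -- the gap A
      set d := spDist w s with hd
      set A := Finset.univ.inf (fun m : Fin n =>
        if j < m then d (e m) + ENNReal.ofReal δ - d (e j) else ⊤) with hA
      have hApos : 0 < A := by
        rw [hA]
        rw [Finset.lt_inf_iff (by simp : (0:ℝ≥0∞) < ⊤)]
        intro m _
        split
        · next hjm => exact tsub_pos_iff_lt.mpr (hPO j m hjm)
        · simp
      set ε := min (ε' : ℝ≥0∞) (A / 2) with hε
      have hεpos : 0 < ε := by
        refine lt_min (by exact_mod_cast hε') ?_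
        exact ENNReal.half_pos hApos.ne'
      have hεA : ε < A := by
        rcases eq_or_ne A ⊤ with hAtop | hAtop
        · rw [hAtop]
          exact lt_of_le_of_lt (min_le_left _ _) (by exact ENNReal.coe_lt_top)
        · exact lt_of_le_of_lt (min_le_right _ _) (ENNReal.half_lt_self hApos.ne' hAtop)
      have hεε' : ε ≤ (ε' : ℝ≥0∞) := min_le_left _ _
      -- get a near-shortest path
      have hlt : d (e j) < d (e j) + ε := ENNReal.lt_add_right (hreach (e j)).ne hεpos.ne'
      have hpath : ∃ k, ∃ p : ℕ → Fin n, ∃ _ : p 0 = s, ∃ _ : p k = e j,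
          pathCost w p k < d (e j) + ε := by
        have h2 := hlt
        rw [hd] at h2
        conv_lhs at h2 => rw [spDist]
        simpa [iInf_lt_iff] using h2
      obtain ⟨k, p, h1, h2, hcost⟩ := hpath
      -- first index not yet extracted
      have hex : ∃ i, j.val ≤ (E.symm (p i)).val := ⟨k, by rw [h2, hsymm]⟩
      have hik : Nat.find hex ≤ k := Nat.find_min' hex (by rw [h2, hsymm])
      have hQi : j.val ≤ (E.symm (p (Nat.find hex))).val := Nat.find_spec hex
      have hi0 : Nat.find hex ≠ 0 := by
        intro h0
        have h' := hQi
        rw [h0, h1, ← hes, hsymm] at h'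
        have : ((⟨0, hn⟩ : Fin n) : ℕ) = 0 := rfl
        omega
      obtain ⟨i', hii'⟩ := Nat.exists_eq_succ_of_ne_zero hi0
      have hnQ : (E.symm (p i')).val < j.val := by
        have := Nat.find_min hex (m := i') (by omega)
        omega
      rw [hii'] at hik hQi
      set r := E.symm (p i') with hr
      have her : e r = p i' := hEe _
      have hIHr : dijkstraD w s e r.val (e r) = d (e r) := IH r.val (by omega) r rfl
      -- relaxation step bound
      have step1 : dijkstraD w s e (r.val + 1) (p (i' + 1)) ≤ d (e r) + w (e r) (p (i' + 1)) := by
        simp only [dijkstraD]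
        rw [dif_pos r.isLt]
        simp only [Fin.eta]
        rw [hIHr]
        exact min_le_right _ _
      have step2 : d (e r) ≤ pathCost w p i' := spDist_le w s i' p h1 her.symm
      have hDji : dijkstraD w s e j.val (p (i' + 1)) ≤ pathCost w p (i' + 1) := by
        refine le_trans (dijkstraD_anti w s e (by omega) _) (le_trans step1 ?_)
        have hsum1 : pathCost w p (i' + 1) = pathCost w p i' + w (e r) (p (i' + 1)) := by
          rw [pathCost, pathCost, Finset.sum_range_succ, her]
        rw [hsum1]
        exact add_le_add_left step2 _
      have hDjk : dijkstraD w s e j.val (p (i' + 1)) < d (e j) + ε :=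
        lt_of_le_of_lt (le_trans hDji (pathCost_mono w p hik)) hcost
      set m := E.symm (p (i' + 1)) with hm
      have hpm : e m = p (i' + 1) := hEe _
      rcases eq_or_lt_of_le hQi with hmj | hmj
      · -- m = j : done
        have hmj' : m = j := Fin.ext hmj.symm
        have hpmj : e j = p (i' + 1) := by rw [← hmj']; exact hpm
        have : dijkstraD w s e j.val (e j) = dijkstraD w s e j.val (p (i' + 1)) := by
          rw [hpmj]
        rw [this]
        exact le_trans hDjk.le (add_le_add_right hεε' _)
      · -- j < m : contradiction with A
        exfalso
        have hik' : i' + 1 < k := by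
          rcases lt_or_eq_of_le hik with h | h
          · exact h
          · exfalso
            have : m = j := by rw [hm, show i' + 1 = k from h, h2, hsymm]
            omega
        have hdm : d (e m) ≤ pathCost w p (i' + 1) := by
          rw [hpm]
          exact le_trans (spDist_le_dijkstraD w s e j.val _) hDji
        have hsum : pathCost w p (i' + 1) + ENNReal.ofReal δ ≤ pathCost w p k := by
          refine le_trans ?_ (pathCost_mono w p (show i' + 2 ≤ k by omega))
          have h1' : pathCost w p (i' + 2) =
              pathCost w p (i' + 1) + w (p (i' + 1)) (p (i' + 2)) := Finset.sum_range_succ _ _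
          rw [h1']
          exact add_le_add_right (hw _ _) _
        have hfin : d (e m) + ENNReal.ofReal δ < d (e j) + ε :=
          lt_of_le_of_lt (le_trans (add_le_add_left hdm _) hsum) hcost
        have hAle : A ≤ d (e m) + ENNReal.ofReal δ - d (e j) := by
          refine le_trans (Finset.inf_le (Finset.mem_univ m)) ?_
          rw [if_pos (show j < m from hmj)]
        have : d (e m) + ENNReal.ofReal δ - d (e j) ≤ ε :=
          tsub_le_iff_right.mpr (by rw [add_comm ε (d (e j))]; exact hfin.le)
        exact absurd (lt_of_le_of_lt (le_trans hAle this) hεA) (lt_irrefl _)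
  have part1 : ∀ j : Fin n, dijkstraD w s e j.val (e j) = spDist w s (e j) :=
    fun j => main j.val j rfl
  refine ⟨part1, fun v => ?_⟩
  obtain ⟨j, rfl⟩ := he.2 v
  refine le_antisymm ?_ (spDist_le_dijkstraD w s e n (e j))
  exact le_trans (dijkstraD_anti w s e j.isLt.le (e j)) (part1 j).le
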